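/- arXiv:2212.03321 — 2 statements merged into one kernel-verified Lean document; each statement's English description precedes it below -/
import Mathlib

section
/- Let A be a real n×n matrix with trace A = 0 and let η : ℝⁿ → ℝ be differentiable at z ∈ ℝⁿ. Then the determinant of the Fréchet derivative at z of the map F(w) := exp(η(w)·A)·w equals 1 + dη_z(A·z), where dη_z is the Fréchet derivative of η at z. -/
open NormedSpace Matrix

/-- Application of an `n × n` real matrix to a vector of `ℝⁿ` (with its standard
Euclidean structure) by matrix-vector multiplication. -/
noncomputable def matApp {n : ℕ} (A : Matrix (Fin n) (Fin n) ℝ)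
    (z : EuclideanSpace ℝ (Fin n)) : EuclideanSpace ℝ (Fin n) :=
  Matrix.toEuclideanLin A z

/-- The determinant as a continuous multilinear map in the rows. -/
noncomputable def detCM (n : ℕ) : ContinuousMultilinearMap ℝ (fun _ : Fin n => (Fin n → ℝ)) ℝ where
  toMultilinearMap :=
    (Matrix.detRowAlternating : AlternatingMap ℝ (Fin n → ℝ) ℝ (Fin n)).toMultilinearMap
  cont := by
    have h : Continuous fun m : Matrix (Fin n) (Fin n) ℝ => m.det := continuous_id.matrix_det
    exact h

lemma detCM_apply {n : ℕ} (m : Fin n → Fin n → ℝ) : detCM n m = Matrix.det (Matrix.of m) := rfl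

theorem det_exp_eq_one {n : ℕ} (B : Matrix (Fin n) (Fin n) ℝ) (hB : B.trace = 0) :
    (exp B).det = 1 := by
  letI : SeminormedRing (Matrix (Fin n) (Fin n) ℝ) := Matrix.linftyOpSemiNormedRing
  letI : NormedRing (Matrix (Fin n) (Fin n) ℝ) := Matrix.linftyOpNormedRing
  letI : NormedAlgebra ℝ (Matrix (Fin n) (Fin n) ℝ) := Matrix.linftyOpNormedAlgebra
  set E : ℝ → Matrix (Fin n) (Fin n) ℝ := fun t => exp (t • B) with hEdef
  have hE : ∀ t : ℝ, HasDerivAt E (B * E t) t := fun t => hasDerivAt_exp_smul_const' B t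
  have hentry : ∀ (i j : Fin n) (t : ℝ), HasDerivAt (fun t => E t i j) ((B * E t) i j) t := by
    intro i j t
    exact (Matrix.entryLinearMap ℝ ℝ i j).toContinuousLinearMap.hasFDerivAt.comp_hasDerivAt t (hE t)
  have hrow : ∀ (i : Fin n) (t : ℝ), HasDerivAt (fun t => E t i) ((B * E t) i) t := fun i t =>
    hasDerivAt_pi.2 fun j => hentry i j t
  have hdet : ∀ t : ℝ, HasDerivAt (fun t => (E t).det) (B.trace * (E t).det) t := by
    intro t
    have h1 : HasDerivAt (fun t => (fun i => E t i)) (fun i => (B * E t) i) t :=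
      hasDerivAt_pi.2 fun i => hrow i t
    have h2 := ((detCM n).hasFDerivAt (fun i => E t i)).comp_hasDerivAt t h1
    have h3 : ((detCM n).linearDeriv (fun i => E t i)) (fun i => (B * E t) i)
        = B.trace * (E t).det := by
      rw [ContinuousMultilinearMap.linearDeriv_apply]
      have hterm : ∀ i : Fin n, detCM n (Function.update (fun i => E t i) i ((B * E t) i))
          = B i i * (E t).det := by
        intro i
        have hrow' : (B * E t) i = ∑ k, B i k • E t k := by
          ext j
          simp [Matrix.mul_apply, Finset.sum_apply]
        have : detCM n (Function.update (fun i => E t i) i ((B * E t) i))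
            = ((E t).updateRow i ((B * E t) i)).det := rfl
        rw [this, hrow', Matrix.det_updateRow_sum (E t) i (fun k => B i k)]
        simp
      rw [Finset.sum_congr rfl fun i _ => hterm i, ← Finset.sum_mul, Matrix.trace]
      rfl
    rw [← h3]
    exact h2
  have hconst : ∀ t : ℝ, HasDerivAt (fun t => (E t).det) 0 t := by
    intro t
    simpa [hB] using hdet t
  have h10 : (E 1).det = (E 0).det :=
    is_const_of_deriv_eq_zero (fun t => (hconst t).differentiableAt)
      (fun t => (hconst t).deriv) 1 0
  simpa [hEdef, exp_zero] using h10

lemma det_toEuclideanCLM {n : ℕ} (M : Matrix (Fin n) (Fin n) ℝ) :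
    (Matrix.toEuclideanCLM (𝕜 := ℝ) M).det = M.det :=
  LinearMap.det_toLin _ M


/-- If `A` is a real `n × n` matrix with `trace A = 0` and `η : ℝⁿ → ℝ` is
differentiable at `z` with Fréchet derivative `η'`, then the determinant of the Fréchet
derivative at `z` of `F(w) = exp(η(w)·A)·w` equals `1 + η'(A·z)`. -/
theorem stmt8 {n : ℕ} (A : Matrix (Fin n) (Fin n) ℝ) (htr : A.trace = 0)
    (η : EuclideanSpace ℝ (Fin n) → ℝ) (z : EuclideanSpace ℝ (Fin n))
    (η' : EuclideanSpace ℝ (Fin n) →L[ℝ] ℝ) (hη : HasFDerivAt η η' z) :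
    (fderiv ℝ (fun w => matApp (NormedSpace.exp (η w • A)) w) z).det =
      1 + η' (matApp A z) := by
  classical
  set T := Matrix.toEuclideanCLM (𝕜 := ℝ) (n := Fin n) with hT
  set s := η z with hs
  set E := exp (s • A) with hE
  have hcomm : A * E = E * A := by
    letI : SeminormedRing (Matrix (Fin n) (Fin n) ℝ) := Matrix.linftyOpSemiNormedRing
    letI : NormedRing (Matrix (Fin n) (Fin n) ℝ) := Matrix.linftyOpNormedRing
    letI : NormedAlgebra ℝ (Matrix (Fin n) (Fin n) ℝ) := Matrix.linftyOpNormedAlgebra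
    exact (((Commute.refl A).smul_right s).exp_right).eq
  have h1 : HasDerivAt (fun t : ℝ => T (exp (t • A))) (T (A * E)) s := by
    letI : SeminormedRing (Matrix (Fin n) (Fin n) ℝ) := Matrix.linftyOpSemiNormedRing
    letI : NormedRing (Matrix (Fin n) (Fin n) ℝ) := Matrix.linftyOpNormedRing
    letI : NormedAlgebra ℝ (Matrix (Fin n) (Fin n) ℝ) := Matrix.linftyOpNormedAlgebra
    have hd : HasDerivAt (fun t : ℝ => exp (t • A)) (A * E) s :=
      hasDerivAt_exp_smul_const' A s
    let TL : Matrix (Fin n) (Fin n) ℝ →ₗ[ℝ]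
        (EuclideanSpace ℝ (Fin n) →L[ℝ] EuclideanSpace ℝ (Fin n)) :=
      { toFun := fun M => T M
        map_add' := fun x y => map_add T x y
        map_smul' := fun c x => map_smul T c x }
    exact TL.toContinuousLinearMap.hasFDerivAt.comp_hasDerivAt s hd
  have hc : HasFDerivAt (fun w => T (exp (η w • A)))
      (((1 : ℝ →L[ℝ] ℝ).smulRight (T (A * E))).comp η') z :=
    h1.hasFDerivAt.comp z hη
  have hF : HasFDerivAt (fun w => T (exp (η w • A)) w)
      ((T E).comp (ContinuousLinearMap.id ℝ _) +
        ((((1 : ℝ →L[ℝ] ℝ).smulRight (T (A * E))).comp η')).flip z) z :=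
    hc.clm_apply (hasFDerivAt_id z)
  set D := (T E).comp (ContinuousLinearMap.id ℝ _) +
    ((((1 : ℝ →L[ℝ] ℝ).smulRight (T (A * E))).comp η')).flip z with hD
  have hF' : HasFDerivAt (fun w => matApp (NormedSpace.exp (η w • A)) w) D z := hF
  rw [hF'.fderiv]
  -- now compute the determinant of D
  set y : EuclideanSpace ℝ (Fin n) := matApp A z with hy
  set c : Fin n → ℝ := fun j => η' (EuclideanSpace.single j 1) with hc'
  have hη'app : ∀ w : EuclideanSpace ℝ (Fin n), η' w = ∑ j, w j * c j := by
    intro w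
    conv_lhs => rw [← (EuclideanSpace.basisFun (Fin n) ℝ).sum_repr w]
    rw [map_sum]
    simp [hc', EuclideanSpace.basisFun_apply, EuclideanSpace.basisFun_repr]
  set P : Matrix (Fin n) (Fin n) ℝ := 1 + Matrix.vecMulVec (fun i => y i) c with hP
  have hDP : D = T (E * P) := by
    ext w j
    rw [hD, hP]
    simp only [ContinuousLinearMap.add_apply, ContinuousLinearMap.comp_apply,
      ContinuousLinearMap.id_apply, ContinuousLinearMap.flip_apply,
      ContinuousLinearMap.smulRight_apply, ContinuousLinearMap.one_apply, hcomm]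
    have happ : ∀ (M : Matrix (Fin n) (Fin n) ℝ) (v : EuclideanSpace ℝ (Fin n)) (j : Fin n),
        (T M v) j = (M *ᵥ (WithLp.equiv 2 (Fin n → ℝ) v)) j := fun M v j => rfl
    simp only [ContinuousLinearMap.smul_apply, PiLp.add_apply, PiLp.smul_apply, happ,
      smul_eq_mul]
    rw [Matrix.mul_add, Matrix.mul_one, Matrix.add_mulVec, ← Matrix.mulVec_mulVec,
      ← Matrix.mulVec_mulVec]
    have hvv : Matrix.vecMulVec (fun i => y i) c *ᵥ (WithLp.equiv 2 (Fin n → ℝ) w)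
        = η' w • (A *ᵥ (WithLp.equiv 2 (Fin n → ℝ) z)) := by
      ext i
      have : (fun i => y i) = A *ᵥ (WithLp.equiv 2 (Fin n → ℝ) z) := rfl
      simp only [Matrix.mulVec, Matrix.vecMulVec_apply, dotProduct, Pi.smul_apply,
        smul_eq_mul, hη'app w, ← this]
      rw [Finset.sum_mul]
      congr 1
      ext k
      simp [WithLp.equiv_apply]
      ring
    rw [hvv, Matrix.mulVec_smul]
    simp
  rw [hDP, hT, det_toEuclideanCLM, Matrix.det_mul]
  have hdetE : E.det = 1 := by
    apply det_exp_eq_one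
    rw [Matrix.trace_smul, htr, smul_zero]
  rw [hdetE, one_mul, hP, Matrix.vecMulVec_eq (Fin 1), Matrix.det_one_add_replicateCol_mul_replicateRow]
  rw [hη'app y]
  simp [dotProduct, mul_comm]
end

section
/- Let φ : ℝⁿ → ℝ be continuously differentiable, α : ℝ → ℝ continuously differentiable with α(0) = 0 and α'(0) = 0, let A be a real n×n matrix and k, γ ∈ ℝ. Then the piecewise-defined warping map S : ℝⁿ → ℝⁿ given by S(z) = z if φ(z) ≤ γ, and S(z) = exp(k·α(φ(z)−γ)·A)·z if φ(z) > γ, is continuously differentiable (C¹) on all of ℝⁿ. -/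
open NormedSpace Asymptotics in
/-- Auxiliary: if `α` is `C¹` with `α 0 = 0` and `α' 0 = 0`, then `t ↦ α (max t 0)`
is `C¹`. -/
lemma beta_contDiff_aux (α : ℝ → ℝ) (hα : ContDiff ℝ 1 α) (hα0 : α 0 = 0)
    (hα'0 : deriv α 0 = 0) : ContDiff ℝ 1 (fun t : ℝ => α (max t 0)) := by
  set β : ℝ → ℝ := fun t => α (max t 0) with hβ
  set d : ℝ → ℝ := fun t => if t ≤ 0 then 0 else deriv α t with hd
  have hdiff : ∀ t, HasDerivAt β (d t) t := by
    intro t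
    rcases lt_trichotomy t 0 with ht | ht | ht
    · have heq : β =ᶠ[nhds t] fun _ => (0 : ℝ) := by
        filter_upwards [Iio_mem_nhds ht] with s hs
        have hs' : s ≤ 0 := le_of_lt (Set.mem_Iio.mp hs)
        simp [hβ, max_eq_right hs', hα0]
      have h0 : HasDerivAt (fun _ : ℝ => (0 : ℝ)) 0 t := hasDerivAt_const t 0
      have := h0.congr_of_eventuallyEq heq
      simpa [hd, ht.le] using this
    · subst ht
      have hα' : HasDerivAt α 0 0 := by
        have := (hα.differentiable one_ne_zero 0).hasDerivAt
        rwa [hα'0] at this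
      rw [hasDerivAt_iff_isLittleO] at hα' ⊢
      simp only [hα0, sub_zero, smul_zero, sub_zero] at hα' ⊢
      have hm : Filter.Tendsto (fun s : ℝ => max s 0) (nhds 0) (nhds 0) :=
        Continuous.tendsto' (continuous_id.max continuous_const) 0 0 (by simp)
      have h1 : (fun s : ℝ => α (max s 0)) =o[nhds 0] fun s => max s 0 :=
        hα'.comp_tendsto hm
      have h2 : (fun s : ℝ => max s 0) =O[nhds 0] fun s : ℝ => s := by
        rw [isBigO_iff]
        refine ⟨1, Filter.Eventually.of_forall fun s => ?_⟩
        simp only [one_mul, Real.norm_eq_abs]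
        rcases le_total s 0 with h | h
        · simp [max_eq_right h, abs_nonneg]
        · simp [max_eq_left h]
      simpa [hd, hβ, hα0] using h1.trans_isBigO h2
    · have heq : β =ᶠ[nhds t] α := by
        filter_upwards [Ioi_mem_nhds ht] with s hs
        have hs' : (0 : ℝ) ≤ s := le_of_lt (Set.mem_Ioi.mp hs)
        simp [hβ, max_eq_left hs']
      have hα' : HasDerivAt α (deriv α t) t := (hα.differentiable one_ne_zero t).hasDerivAt
      have := hα'.congr_of_eventuallyEq heq
      simpa [hd, not_le.mpr ht] using this
  rw [contDiff_one_iff_deriv]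
  refine ⟨fun t => (hdiff t).differentiableAt, ?_⟩
  have hde : deriv β = d := funext fun t => (hdiff t).deriv
  rw [hde, hd]
  exact Continuous.if_le continuous_const (hα.continuous_deriv le_rfl) continuous_id
    continuous_const (fun x hx => by rw [hx]; exact hα'0.symm)

/-- If `φ : ℝⁿ → ℝ` is `C¹`, `α : ℝ → ℝ` is `C¹` with `α(0) = 0` and
`α'(0) = 0`, `A` is a real `n × n` matrix and `k, γ ∈ ℝ`, then the piecewise warping map
`S(z) = z` if `φ(z) ≤ γ`, `S(z) = exp(k·α(φ(z)−γ)·A)·z` if `φ(z) > γ`, is `C¹` on `ℝⁿ`. -/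
theorem stmt10 {n : ℕ} (φ : EuclideanSpace ℝ (Fin n) → ℝ) (hφ : ContDiff ℝ 1 φ)
    (α : ℝ → ℝ) (hα : ContDiff ℝ 1 α) (hα0 : α 0 = 0) (hα'0 : deriv α 0 = 0)
    (A : Matrix (Fin n) (Fin n) ℝ) (k γ : ℝ) :
    ContDiff ℝ 1 (fun z : EuclideanSpace ℝ (Fin n) =>
      if φ z ≤ γ then z
      else matApp (NormedSpace.exp ((k * α (φ z - γ)) • A)) z) := by
  set β : ℝ → ℝ := fun t => α (max t 0) with hβ
  have hβC : ContDiff ℝ 1 β := beta_contDiff_aux α hα hα0 hα'0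
  set T := Matrix.toEuclideanCLM (𝕜 := ℝ) (n := Fin n) with hT
  let le : Matrix (Fin n) (Fin n) ℝ ≃ₗ[ℝ]
      (EuclideanSpace ℝ (Fin n) →L[ℝ] EuclideanSpace ℝ (Fin n)) :=
    { toFun := ⇑T
      invFun := ⇑T.symm
      map_add' := fun x y => map_add _ x y
      map_smul' := fun c x => map_smul _ c x
      left_inv := fun x => T.symm_apply_apply x
      right_inv := fun x => T.apply_symm_apply x }
  let e : Matrix (Fin n) (Fin n) ℝ ≃L[ℝ]
      (EuclideanSpace ℝ (Fin n) →L[ℝ] EuclideanSpace ℝ (Fin n)) :=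
    { le with
      continuous_toFun := le.toLinearMap.continuous_of_finiteDimensional
      continuous_invFun := le.symm.toLinearMap.continuous_of_finiteDimensional }
  set A' : EuclideanSpace ℝ (Fin n) →L[ℝ] EuclideanSpace ℝ (Fin n) := T A with hA'
  have hmap : ∀ M : Matrix (Fin n) (Fin n) ℝ,
      T (NormedSpace.exp M) = NormedSpace.exp (T M) := by
    intro M
    have he : T (NormedSpace.exp M) = e (NormedSpace.exp M) := rfl
    rw [he]
    simp only [NormedSpace.exp_eq_tsum (𝕂 := ℝ)]
    rw [e.map_tsum]
    congr 1
    funext j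
    rw [map_smul, show e (M ^ j) = T M ^ j from map_pow T M j]
  have key : (fun z : EuclideanSpace ℝ (Fin n) =>
      if φ z ≤ γ then z
      else matApp (NormedSpace.exp ((k * α (φ z - γ)) • A)) z) =
      fun z => NormedSpace.exp ((k * β (φ z - γ)) • A') z := by
    funext z
    split_ifs with h
    · have hβ0 : β (φ z - γ) = 0 := by
        rw [hβ]
        simp only
        rw [max_eq_right (sub_nonpos.mpr h), hα0]
      rw [hβ0, mul_zero, zero_smul ℝ A', NormedSpace.exp_zero]
      rfl
    · have hβα : β (φ z - γ) = α (φ z - γ) := by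
        rw [hβ]
        simp only
        rw [max_eq_left (le_of_lt (sub_pos.mpr (not_le.mp h)))]
      have : (k * β (φ z - γ)) • A' = T ((k * α (φ z - γ)) • A) := by
        rw [hβα, map_smul]
      rw [this, ← hmap]
      rfl
  rw [key]
  have hscal : ContDiff ℝ 1 (fun z : EuclideanSpace ℝ (Fin n) =>
      (k * β (φ z - γ)) • A') :=
    ((contDiff_const.mul (hβC.comp (hφ.sub contDiff_const))).smul contDiff_const)
  have hexp : ContDiff ℝ 1 (NormedSpace.exp :
      (EuclideanSpace ℝ (Fin n) →L[ℝ] EuclideanSpace ℝ (Fin n)) → _) := by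
    rw [contDiff_iff_contDiffAt]
    exact fun x => (NormedSpace.exp_analytic (𝕂 := ℝ) x).contDiffAt
  exact (hexp.comp hscal).clm_apply contDiff_id
end
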